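/- Let (V,1) be a matrix order unit space and let D = (Dₙ) be a matrix metric on CS(V) that is convex, midpoint balanced and midpoint concave. Then for each n there is a norm Q''ₙ on the real vector space ℝ·SBₙ²(Ṽ) such that Q''ₙ(α*fα) ≤ ‖α‖²·Q''ₘ(f) for f ∈ ℝ·SBₘ²(Ṽ) and α ∈ M_{m,n}, Q''_{m+n}(f ⊕ g) = max{Q''ₘ(f), Q''ₙ(g)}, and Q''ₙ(φ − ψ) = Dₙ(φ,ψ) for all φ, ψ ∈ CSₙ(V). -/

import Mathlib

open scoped ENNReal ComplexOrder
open Matrix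

noncomputable section

abbrev Mat (n : ℕ) (V : Type*) := Matrix (Fin n) (Fin n) V
abbrev CMat (m n : ℕ) := Matrix (Fin m) (Fin n) ℂ

/-- The operator norm (ℓ² → ℓ²) of a complex rectangular matrix. -/
def opNorm {I J : Type*} [Fintype I] [Fintype J] [DecidableEq I] [DecidableEq J]
    (M : Matrix I J ℂ) : ℝ :=
  ‖LinearMap.toContinuousLinearMap (Matrix.toEuclideanLin M)‖

variable {V : Type*} [AddCommGroup V] [Module ℂ V] [StarAddMonoid V] [StarModule ℂ V]

/-- `γᴴ a γ` for a scalar matrix `γ` and a matrix `a` over `V`. -/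
def conjEntry {m n : ℕ} (γ : CMat m n) (a : Mat m V) : Mat n V :=
  Matrix.of fun i j => ∑ k, ∑ l, (star (γ k i) * γ l j) • a k l

/-- `α a β` for scalar matrices `α, β` and a matrix `a` over `V`. -/
def cMul {m n : ℕ} (α : CMat n m) (a : Mat m V) (β : CMat m n) : Mat n V :=
  Matrix.of fun i j => ∑ k, ∑ l, (α i k * β l j) • a k l

/-- The direct sum `a ⊕ b` of two square matrices. -/
def dSum {W : Type*} [AddCommGroup W] {m n : ℕ} (a : Matrix (Fin m) (Fin m) W)
    (b : Matrix (Fin n) (Fin n) W) : Matrix (Fin (m + n)) (Fin (m + n)) W :=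
  (Matrix.fromBlocks a 0 0 b).submatrix finSumFinEquiv.symm finSumFinEquiv.symm

/-- The canonical identification of `V` with `M₁(V)`. -/
def toM1 (v : V) : Mat 1 V := Matrix.of fun _ _ => v

/-- The diagonal matrix with diagonal entries `e`. -/
def unitM (e : V) (n : ℕ) : Mat n V := Matrix.of fun i j => if i = j then e else 0

/-- The scalar matrix `[c i j • e]`. -/
def scalMat (e : V) {n : ℕ} (c : CMat n n) : Mat n V := Matrix.of fun i j => c i j • e

/-- `a` is a scalar matrix, i.e. `a ∈ Mₙ(ℂ·e)`. -/
def isScalarMat (e : V) {n : ℕ} (a : Mat n V) : Prop := ∃ c : CMat n n, a = scalMat e c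

/-- The 2×2 block matrix `[[t·1, v], [vᴴ, t·1]]`. -/
def blockSA (e : V) {n : ℕ} (t : ℝ) (v : Mat n V) : Mat (n + n) V :=
  (Matrix.fromBlocks ((t : ℂ) • unitM e n) v vᴴ ((t : ℂ) • unitM e n)).submatrix
    finSumFinEquiv.symm finSumFinEquiv.symm

/-- A matrix order unit space `(V, 1)`: a matrix ordered *-vector space together with a
distinguished order unit such that `V⁺` is a proper cone with order unit `1` and each of the
cones `Mₙ(V)⁺` is Archimedean. -/
structure MOUS (V : Type*) [AddCommGroup V] [Module ℂ V] [StarAddMonoid V]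
    [StarModule ℂ V] where
  unit : V
  star_unit : star unit = unit
  pos : ∀ n, Set (Mat n V)
  zero_mem : ∀ n, (0 : Mat n V) ∈ pos n
  add_mem : ∀ n, ∀ a ∈ pos n, ∀ b ∈ pos n, a + b ∈ pos n
  smul_mem : ∀ n (t : ℝ), 0 ≤ t → ∀ a ∈ pos n, ((t : ℂ) • a) ∈ pos n
  isSelfAdjoint_mem : ∀ n, ∀ a ∈ pos n, aᴴ = a
  conj_mem : ∀ m n (γ : CMat m n), ∀ a ∈ pos m, conjEntry γ a ∈ pos n
  proper : ∀ n, ∀ a ∈ pos n, -a ∈ pos n → a = 0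
  orderUnit : ∀ v : V, star v = v → ∃ t : ℝ, 0 < t ∧ toM1 ((t : ℂ) • unit - v) ∈ pos 1
  arch : ∀ n (a : Mat n V), aᴴ = a →
    (∀ t : ℝ, 0 < t → ((t : ℂ) • unitM unit n + a) ∈ pos n) → a ∈ pos n

/-- The norm on `Mₙ(V)` determined by the matrix order:
`‖v‖ₙ = inf {t : [[t1, v], [v*, t1]] ≥ 0}`. -/
def MOUS.matNorm (S : MOUS V) (n : ℕ) (v : Mat n V) : ℝ :=
  sInf {t : ℝ | blockSA S.unit t v ∈ S.pos (n + n)}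

/-- The matrix pairing `⟪φ, a⟫ = [φ(a_{ij})]`, as a complex matrix indexed by
`Fin r × Fin n`. -/
def pairing {n r : ℕ} (φ : V →ₗ[ℂ] CMat n n) (a : Mat r V) :
    Matrix (Fin r × Fin n) (Fin r × Fin n) ℂ :=
  Matrix.of fun p q => φ (a p.1 q.1) p.2 q.2

/-- The matrix state space: `CSₙ(V)` is the set of unital completely positive maps
`V → Mₙ`. -/
def MOUS.CS (S : MOUS V) (n : ℕ) : Set (V →ₗ[ℂ] CMat n n) :=
  {φ | φ S.unit = 1 ∧ ∀ r, ∀ a ∈ S.pos r, (pairing φ a).PosSemidef}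

/-- A matrix Lipschitz seminorm on a matrix order unit space. -/
structure MatLip (S : MOUS V) where
  L : ∀ n, Mat n V → ℝ
  nonneg : ∀ n a, 0 ≤ L n a
  add_le : ∀ n (a b : Mat n V), L n (a + b) ≤ L n a + L n b
  smul_eq : ∀ n (c : ℂ) (a : Mat n V), L n (c • a) = ‖c‖ * L n a
  null : ∀ n (a : Mat n V), L n a = 0 ↔ isScalarMat S.unit a
  dSum_eq : ∀ m n (v : Mat m V) (w : Mat n V), L (m + n) (dSum v w) = max (L m v) (L n w)
  cMul_le : ∀ m n (α : CMat n m) (v : Mat m V) (β : CMat m n),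
    L n (cMul α v β) ≤ opNorm α * L m v * opNorm β
  star_eq : ∀ n (v : Mat n V), L n vᴴ = L n v

/-- The metric `D_{Lₙ}` on the matrix state space `CSₙ(V)` (with values in `[0,∞]`). -/
def Dl (S : MOUS V) (Lp : MatLip S) {n : ℕ} (φ ψ : V →ₗ[ℂ] CMat n n) : ℝ≥0∞ :=
  ⨆ (r : ℕ) (a : Mat r V) (_ : Lp.L r a ≤ 1),
    ENNReal.ofReal (opNorm (pairing φ a - pairing ψ a))

/-- The gauge `L_{D_{Lₙ}}` recovered from the matrix metric `D_L`. -/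
def LDl (S : MOUS V) (Lp : MatLip S) (n : ℕ) (a : Mat n V) : ℝ≥0∞ :=
  ⨆ (r : ℕ) (φ : V →ₗ[ℂ] CMat r r) (_ : φ ∈ S.CS r) (ψ : V →ₗ[ℂ] CMat r r)
    (_ : ψ ∈ S.CS r) (_ : φ ≠ ψ),
    ENNReal.ofReal (opNorm (pairing φ a - pairing ψ a)) / Dl S Lp φ ψ

/-- The direct sum `f ⊕ g` of elements of `Mₘ(V*)` and `Mₙ(V*)` (viewed as maps into matrix
algebras): `v ↦ f(v) ⊕ g(v)`. -/
def mapDSum {m n : ℕ} (f : V →ₗ[ℂ] CMat m m) (g : V →ₗ[ℂ] CMat n n) :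
    V →ₗ[ℂ] CMat (m + n) (m + n) where
  toFun v := dSum (f v) (g v)
  map_add' u v := by
    ext i j
    rcases h1 : finSumFinEquiv.symm i with i' | i' <;> rcases h2 : finSumFinEquiv.symm j with j' | j' <;>
      simp [dSum, Matrix.submatrix_apply, h1, h2, map_add, Matrix.add_apply]
  map_smul' c v := by
    ext i j
    rcases h1 : finSumFinEquiv.symm i with i' | i' <;> rcases h2 : finSumFinEquiv.symm j with j' | j' <;>
      simp [dSum, Matrix.submatrix_apply, h1, h2, _root_.map_smul, Matrix.smul_apply]

/-- The product `α f β` of an element `f` of `Mₘ(V*)` with scalar matrices: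
`v ↦ α f(v) β`. -/
def mapCMul {m n : ℕ} (α : CMat n m) (f : V →ₗ[ℂ] CMat m m) (β : CMat m n) :
    V →ₗ[ℂ] CMat n n where
  toFun v := α * f v * β
  map_add' u v := by simp [map_add, Matrix.mul_add, Matrix.add_mul]
  map_smul' c v := by simp [_root_.map_smul, Matrix.mul_smul, Matrix.smul_mul]

/-- A matrix metric on the matrix state space `CS(V)`. -/
structure MatMetric (S : MOUS V) where
  D : ∀ n, (V →ₗ[ℂ] CMat n n) → (V →ₗ[ℂ] CMat n n) → ℝ
  nonneg : ∀ n (φ ψ : V →ₗ[ℂ] CMat n n), φ ∈ S.CS n → ψ ∈ S.CS n → 0 ≤ D n φ ψ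
  eq_zero_iff : ∀ n (φ ψ : V →ₗ[ℂ] CMat n n), φ ∈ S.CS n → ψ ∈ S.CS n →
    (D n φ ψ = 0 ↔ φ = ψ)
  symm : ∀ n (φ ψ : V →ₗ[ℂ] CMat n n), φ ∈ S.CS n → ψ ∈ S.CS n → D n φ ψ = D n ψ φ
  triangle : ∀ n (φ ψ χ : V →ₗ[ℂ] CMat n n), φ ∈ S.CS n → ψ ∈ S.CS n → χ ∈ S.CS n →
    D n φ χ ≤ D n φ ψ + D n ψ χ
  dsum_eq : ∀ m n (φ φ' : V →ₗ[ℂ] CMat m m) (ψ ψ' : V →ₗ[ℂ] CMat n n),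
    φ ∈ S.CS m → φ' ∈ S.CS m → ψ ∈ S.CS n → ψ' ∈ S.CS n →
    D (m + n) (mapDSum φ ψ) (mapDSum φ' ψ') = max (D m φ φ') (D n ψ ψ')
  conj_le : ∀ m n (α : CMat m n), αᴴ * α = 1 → ∀ (φ ψ : V →ₗ[ℂ] CMat m m),
    φ ∈ S.CS m → ψ ∈ S.CS m → D n (mapCMul αᴴ φ α) (mapCMul αᴴ ψ α) ≤ D m φ ψ

/-- A matrix metric on `CS(V)` is convex. -/
def MMConvex (S : MOUS V) (Dm : MatMetric S) : Prop :=
  ∀ n (φ ψ χ : V →ₗ[ℂ] CMat n n), φ ∈ S.CS n → ψ ∈ S.CS n → χ ∈ S.CS n →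
    ∀ t : ℝ, 0 ≤ t → t ≤ 1 →
      Dm.D n φ ((t : ℂ) • ψ + ((1 - t : ℝ) : ℂ) • χ) ≤ t * Dm.D n φ ψ + (1 - t) * Dm.D n φ χ

/-- A matrix metric on `CS(V)` is midpoint balanced. -/
def MMBalanced (S : MOUS V) (Dm : MatMetric S) : Prop :=
  ∀ n (x y u v : V →ₗ[ℂ] CMat n n), x ∈ S.CS n → y ∈ S.CS n → u ∈ S.CS n → v ∈ S.CS n →
    ((2 : ℂ)⁻¹ • (x + v) = (2 : ℂ)⁻¹ • (y + u)) → Dm.D n x u = Dm.D n y v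

/-- A matrix metric on `CS(V)` is midpoint concave. -/
def MMConcave (S : MOUS V) (Dm : MatMetric S) : Prop :=
  ∀ n (x y u v : V →ₗ[ℂ] CMat n n), x ∈ S.CS n → y ∈ S.CS n → u ∈ S.CS n → v ∈ S.CS n →
    Dm.D n ((2 : ℂ)⁻¹ • (x + u)) ((2 : ℂ)⁻¹ • (y + v)) ≤ (Dm.D n x y + Dm.D n u v) / 2

/-- The real vector space `ℝ·SBₙ²(Ṽ)` of real multiples of differences of matrix states. -/
def RSB (S : MOUS V) (n : ℕ) : Set (V →ₗ[ℂ] CMat n n) :=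
  {g | ∃ t : ℝ, ∃ φ ∈ S.CS n, ∃ ψ ∈ S.CS n, g = (t : ℂ) • (φ - ψ)}

section Aux

open scoped Matrix.Norms.L2Operator

lemma opNorm_eq_norm {I J : Type*} [Fintype I] [Fintype J] [DecidableEq I] [DecidableEq J]
    (M : Matrix I J ℂ) : opNorm M = ‖M‖ := rfl

lemma opNorm_nonneg' {I J : Type*} [Fintype I] [Fintype J] [DecidableEq I] [DecidableEq J]
    (M : Matrix I J ℂ) : 0 ≤ opNorm M := by rw [opNorm_eq_norm]; exact norm_nonneg M

lemma opNorm_eq_zero_iff {I J : Type*} [Fintype I] [Fintype J] [DecidableEq I] [DecidableEq J]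
    (M : Matrix I J ℂ) : opNorm M = 0 ↔ M = 0 := by rw [opNorm_eq_norm]; exact norm_eq_zero

lemma opNorm_real_smul {I J : Type*} [Fintype I] [Fintype J] [DecidableEq I] [DecidableEq J]
    (c : ℝ) (M : Matrix I J ℂ) : opNorm ((c : ℂ) • M) = |c| * opNorm M := by
  rw [opNorm_eq_norm, opNorm_eq_norm, norm_smul]
  simp [Real.norm_eq_abs]

lemma star_dotProduct_self_eq {k : ℕ} (z : Fin k → ℂ) :
    star z ⬝ᵥ z = ((‖(EuclideanSpace.equiv (Fin k) ℂ).symm z‖ ^ 2 : ℝ) : ℂ) := by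
  rw [EuclideanSpace.norm_eq, Real.sq_sqrt (by positivity)]
  push_cast
  rw [dotProduct]
  refine Finset.sum_congr rfl fun i _ => ?_
  have : ((‖z i‖ : ℝ) : ℂ) ^ 2 = ((‖z i‖ ^ 2 : ℝ) : ℂ) := by push_cast; ring
  simp only [Pi.star_apply]
  rw [show (star (z i) * z i = ((‖z i‖ ^ 2 : ℝ) : ℂ)) from ?_]
  · push_cast; rfl
  · rw [Complex.star_def, mul_comm, Complex.mul_conj]
    norm_num [Complex.normSq_eq_norm_sq]

lemma psd_one_sub_conj {M N : ℕ} (A : CMat M N) (h : opNorm A ≤ 1) :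
    ((1 : CMat N N) - Aᴴ * A).PosSemidef := by
  refine Matrix.PosSemidef.of_dotProduct_mulVec_nonneg ?_ ?_
  · show ((1 : CMat N N) - Aᴴ * A)ᴴ = _
    rw [conjTranspose_sub, conjTranspose_one, conjTranspose_mul, conjTranspose_conjTranspose]
  · intro x
    have hsub : ((1 : CMat N N) - Aᴴ * A) *ᵥ x = x - Aᴴ *ᵥ (A *ᵥ x) := by
      rw [sub_mulVec, one_mulVec, ← mulVec_mulVec]
    have e2 : star x ⬝ᵥ (Aᴴ *ᵥ (A *ᵥ x)) = star (A *ᵥ x) ⬝ᵥ (A *ᵥ x) := by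
      rw [dotProduct_mulVec, ← star_mulVec]
    rw [hsub, dotProduct_sub, e2, star_dotProduct_self_eq, star_dotProduct_self_eq,
      ← Complex.ofReal_sub, Complex.zero_le_real, sub_nonneg]
    have hb := Matrix.l2_opNorm_mulVec A ((EuclideanSpace.equiv (Fin N) ℂ).symm x)
    have hx : (A *ᵥ ((EuclideanSpace.equiv (Fin N) ℂ).symm x : Fin N → ℂ)) = A *ᵥ x := rfl
    rw [hx] at hb
    rw [opNorm_eq_norm] at h
    have h0 : (0:ℝ) ≤ ‖(EuclideanSpace.equiv (Fin N) ℂ).symm x‖ := norm_nonneg _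
    have h4 : ‖(EuclideanSpace.equiv (Fin M) ℂ).symm (A *ᵥ x)‖ ≤
        ‖(EuclideanSpace.equiv (Fin N) ℂ).symm x‖ := hb.trans (by nlinarith)
    exact pow_le_pow_left₀ (norm_nonneg _) h4 2

lemma pairing_add {n r : ℕ} (φ ψ : V →ₗ[ℂ] CMat n n) (a : Mat r V) :
    pairing (φ + ψ) a = pairing φ a + pairing ψ a := by
  ext p q; simp [pairing]

lemma pairing_smul {n r : ℕ} (c : ℂ) (φ : V →ₗ[ℂ] CMat n n) (a : Mat r V) :
    pairing (c • φ) a = c • pairing φ a := by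
  ext p q; simp [pairing]

lemma psd_real_smul {k : Type*} [Fintype k] {A : Matrix k k ℂ} (hA : A.PosSemidef) {r : ℝ}
    (hr : 0 ≤ r) : ((r : ℂ) • A).PosSemidef := by
  refine Matrix.PosSemidef.of_dotProduct_mulVec_nonneg ?_ ?_
  · show _ᴴ = _
    rw [conjTranspose_smul, hA.1]
    norm_num
  · intro x
    rw [smul_mulVec, dotProduct_smul, smul_eq_mul]
    exact mul_nonneg (Complex.zero_le_real.2 hr) (hA.dotProduct_mulVec_nonneg x)

lemma CS_combo {S : MOUS V} {n : ℕ} {φ ψ : V →ₗ[ℂ] CMat n n} (hφ : φ ∈ S.CS n)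
    (hψ : ψ ∈ S.CS n) {r : ℝ} (h0 : 0 ≤ r) (h1 : r ≤ 1) :
    (r : ℂ) • φ + ((1 - r : ℝ) : ℂ) • ψ ∈ S.CS n := by
  constructor
  · simp only [LinearMap.add_apply, LinearMap.smul_apply, hφ.1, hψ.1]
    rw [← add_smul]
    push_cast
    simp
  · intro s a ha
    rw [pairing_add, pairing_smul, pairing_smul]
    exact (psd_real_smul (hφ.2 s a ha) h0).add (psd_real_smul (hψ.2 s a ha) (by linarith))

lemma psd_fromBlocks_diag {A B : Type*} [Fintype A] [Fintype B] [DecidableEq A] [DecidableEq B]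
    {P : Matrix A A ℂ} {Q : Matrix B B ℂ} (hP : P.PosSemidef) (hQ : Q.PosSemidef) :
    (Matrix.fromBlocks P 0 0 Q).PosSemidef := by
  refine Matrix.PosSemidef.of_dotProduct_mulVec_nonneg ?_ ?_
  · show _ᴴ = _
    rw [fromBlocks_conjTranspose, hP.1, hQ.1]
    simp
  · intro x
    rw [fromBlocks_mulVec]
    simp only [zero_mulVec, add_zero, zero_add]
    have e : star x ⬝ᵥ Sum.elim (P *ᵥ (x ∘ Sum.inl)) (Q *ᵥ (x ∘ Sum.inr))
        = star (x ∘ Sum.inl) ⬝ᵥ (P *ᵥ (x ∘ Sum.inl))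
          + star (x ∘ Sum.inr) ⬝ᵥ (Q *ᵥ (x ∘ Sum.inr)) := by
      simp [dotProduct, Fintype.sum_sum_type]
    rw [e]
    exact add_nonneg (hP.dotProduct_mulVec_nonneg _) (hQ.dotProduct_mulVec_nonneg _)

lemma dSum_one {m n : ℕ} : dSum (1 : CMat m m) (1 : CMat n n) = 1 := by
  rw [dSum, fromBlocks_one, submatrix_one_equiv]

lemma dSum_smul_sub {W : Type*} [AddCommGroup W] [Module ℂ W] {m n : ℕ} (c : ℂ)
    (a a' : Matrix (Fin m) (Fin m) W) (b b' : Matrix (Fin n) (Fin n) W) :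
    dSum (c • (a - a')) (c • (b - b')) = c • (dSum a b - dSum a' b') := by
  ext i j
  rcases h1 : finSumFinEquiv.symm i with i' | i' <;>
    rcases h2 : finSumFinEquiv.symm j with j' | j' <;>
    simp [dSum, h1, h2, Matrix.smul_apply, Matrix.sub_apply]

lemma mapDSum_smul_sub {m n : ℕ} (t : ℂ) (φ ψ : V →ₗ[ℂ] CMat m m) (φ' ψ' : V →ₗ[ℂ] CMat n n) :
    mapDSum (t • (φ - ψ)) (t • (φ' - ψ')) = t • (mapDSum φ φ' - mapDSum ψ ψ') := by
  apply LinearMap.ext; intro v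
  show dSum ((t • (φ - ψ)) v) ((t • (φ' - ψ')) v) = _
  simp only [LinearMap.smul_apply, LinearMap.sub_apply]
  rw [dSum_smul_sub]
  rfl

lemma CS_mapDSum {S : MOUS V} {m n : ℕ} {φ : V →ₗ[ℂ] CMat m m} {ψ : V →ₗ[ℂ] CMat n n}
    (hφ : φ ∈ S.CS m) (hψ : ψ ∈ S.CS n) : mapDSum φ ψ ∈ S.CS (m + n) := by
  constructor
  · show dSum (φ S.unit) (ψ S.unit) = 1
    rw [hφ.1, hψ.1, dSum_one]
  · intro r a ha
    have key : pairing (mapDSum φ ψ) a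
        = (Matrix.fromBlocks (pairing φ a) 0 0 (pairing ψ a)).submatrix
            (fun x : Fin r × Fin (m + n) => Sum.elim (fun i' => Sum.inl (x.1, i'))
              (fun i' => Sum.inr (x.1, i')) (finSumFinEquiv.symm x.2))
            (fun x : Fin r × Fin (m + n) => Sum.elim (fun i' => Sum.inl (x.1, i'))
              (fun i' => Sum.inr (x.1, i')) (finSumFinEquiv.symm x.2)) := by
      ext ⟨p, i⟩ ⟨q, j⟩
      show (mapDSum φ ψ) (a p q) i j = _
      rcases h1 : finSumFinEquiv.symm i with i' | i' <;>
        rcases h2 : finSumFinEquiv.symm j with j' | j' <;>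
        simp [pairing, mapDSum, dSum, h1, h2]
    rw [key]
    exact (psd_fromBlocks_diag (hφ.2 r a ha) (hψ.2 r a ha)).submatrix _

lemma CS_isometry {S : MOUS V} {M N : ℕ} (β : CMat M N) (hβ : βᴴ * β = 1)
    {Φ : V →ₗ[ℂ] CMat M M} (hΦ : Φ ∈ S.CS M) : mapCMul βᴴ Φ β ∈ S.CS N := by
  constructor
  · show βᴴ * Φ S.unit * β = 1
    rw [hΦ.1, Matrix.mul_one, hβ]
  · intro r a ha
    classical
    set B : Matrix (Fin r × Fin M) (Fin r × Fin N) ℂ :=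
      Matrix.of fun p q => if p.1 = q.1 then β p.2 q.2 else 0 with hB
    have key : pairing (mapCMul βᴴ Φ β) a = Bᴴ * pairing Φ a * B := by
      ext ⟨p, i⟩ ⟨q, j⟩
      show (βᴴ * Φ (a p q) * β) i j = (Bᴴ * pairing Φ a * B) (p, i) (q, j)
      simp only [Matrix.mul_apply, Matrix.conjTranspose_apply, hB, Matrix.of_apply,
        Fintype.sum_prod_type, pairing, apply_ite (star : ℂ → ℂ), star_zero, ite_mul, mul_ite,
        zero_mul, mul_zero, Finset.sum_ite_irrel, Finset.sum_const_zero, Finset.sum_ite_eq,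
        Finset.sum_ite_eq', Finset.mem_univ, if_true]
    rw [key]
    exact (hΦ.2 r a ha).conjTranspose_mul_mul_same B

lemma stacked_conj_mul {m N : ℕ} (α' : CMat m N) (γ : CMat N N) :
    ∀ (A : CMat m m) (B : CMat N N),
    ((Matrix.fromRows α' γ).submatrix (finSumFinEquiv.symm : Fin (m + N) → Fin m ⊕ Fin N) id)ᴴ
      * dSum A B * ((Matrix.fromRows α' γ).submatrix finSumFinEquiv.symm id)
    = α'ᴴ * A * α' + γᴴ * B * γ := by
  intro A B
  rw [dSum, conjTranspose_submatrix, submatrix_mul_equiv, submatrix_mul_equiv,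
    submatrix_id_id, conjTranspose_fromRows_eq_fromCols_conjTranspose,
    fromCols_mul_fromBlocks, fromCols_mul_fromRows]
  simp [Matrix.mul_assoc]

lemma stacked_isometry {m N : ℕ} (α' : CMat m N) (γ : CMat N N) (hγ : γᴴ = γ)
    (hsum : α'ᴴ * α' + γ * γ = 1) :
    ((Matrix.fromRows α' γ).submatrix (finSumFinEquiv.symm : Fin (m + N) → Fin m ⊕ Fin N) id)ᴴ
      * ((Matrix.fromRows α' γ).submatrix finSumFinEquiv.symm id) = 1 := by
  rw [conjTranspose_submatrix, submatrix_mul_equiv, submatrix_id_id,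
    conjTranspose_fromRows_eq_fromCols_conjTranspose, fromCols_mul_fromRows, hγ, hsum]

end Aux

section Aux2

variable {S : MOUS V} {Dm : MatMetric S}

lemma D_self {n : ℕ} {φ : V →ₗ[ℂ] CMat n n} (hφ : φ ∈ S.CS n) : Dm.D n φ φ = 0 :=
  (Dm.eq_zero_iff n φ φ hφ hφ).2 rfl

lemma D_translate (hb : MMBalanced S Dm) {n : ℕ} {φ ψ φ' ψ' : V →ₗ[ℂ] CMat n n}
    (hφ : φ ∈ S.CS n) (hψ : ψ ∈ S.CS n) (hφ' : φ' ∈ S.CS n) (hψ' : ψ' ∈ S.CS n)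
    (h : φ - ψ = φ' - ψ') : Dm.D n φ ψ = Dm.D n φ' ψ' :=
  hb n φ φ' ψ ψ' hφ hφ' hψ hψ'
    (congrArg (fun g => (2 : ℂ)⁻¹ • g) (sub_eq_sub_iff_add_eq_add.mp h))

lemma D_segment (hc : MMConvex S Dm) {n : ℕ} {φ ψ : V →ₗ[ℂ] CMat n n}
    (hφ : φ ∈ S.CS n) (hψ : ψ ∈ S.CS n) {r : ℝ} (h0 : 0 ≤ r) (hr1 : r ≤ 1) :
    Dm.D n ((r : ℂ) • φ + ((1 - r : ℝ) : ℂ) • ψ) ψ = r * Dm.D n φ ψ := by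
  have hχ : (r : ℂ) • φ + ((1 - r : ℝ) : ℂ) • ψ ∈ S.CS n := CS_combo hφ hψ h0 hr1
  set χ := (r : ℂ) • φ + ((1 - r : ℝ) : ℂ) • ψ with hχdef
  have e1 := hc n ψ φ ψ hψ hφ hψ r h0 hr1
  have e2 := hc n φ φ ψ hφ hφ hψ r h0 hr1
  have tri := Dm.triangle n φ χ ψ hφ hχ hψ
  have s1 := Dm.symm n χ ψ hχ hψ
  have s2 := Dm.symm n ψ φ hψ hφ
  have z1 := D_self (Dm := Dm) hφ
  have z2 := D_self (Dm := Dm) hψ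
  rw [z2, s2] at e1
  rw [z1] at e2
  have hle : Dm.D n χ ψ ≤ r * Dm.D n φ ψ := by rw [s1]; linarith
  have hge : r * Dm.D n φ ψ ≤ Dm.D n χ ψ := by linarith
  exact le_antisymm hle hge

lemma welldef_aux (hc : MMConvex S Dm) (hb : MMBalanced S Dm) {n : ℕ}
    {φ ψ φ' ψ' : V →ₗ[ℂ] CMat n n} (hφ : φ ∈ S.CS n) (hψ : ψ ∈ S.CS n)
    (hφ' : φ' ∈ S.CS n) (hψ' : ψ' ∈ S.CS n) {t s : ℝ} (hs : 0 ≤ s) (hst : s ≤ t)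
    (h : (t : ℂ) • (φ - ψ) = (s : ℂ) • (φ' - ψ')) :
    t * Dm.D n φ ψ = s * Dm.D n φ' ψ' := by
  rcases eq_or_lt_of_le (hs.trans hst) with h0 | h0
  · have hs0 : s = 0 := le_antisymm (hst.trans h0.symm.le) hs
    rw [← h0, hs0, zero_mul, zero_mul]
  · set r := s / t with hrdef
    have hr0 : 0 ≤ r := div_nonneg hs h0.le
    have hr1 : r ≤ 1 := (div_le_one h0).2 hst
    have key : φ - ψ = (r : ℂ) • (φ' - ψ') := by
      have h2' := congrArg (fun g => ((t⁻¹ : ℝ) : ℂ) • g) h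
      simp only [smul_smul, ← Complex.ofReal_mul, inv_mul_cancel₀ (ne_of_gt h0)] at h2'
      rw [Complex.ofReal_one, one_smul] at h2'
      rw [h2', hrdef]
      congr 2
      field_simp
    have hform : φ - ψ = ((r : ℂ) • φ' + ((1 - r : ℝ) : ℂ) • ψ') - ψ' := by
      rw [key]; push_cast; module
    have hD := D_translate hb hφ hψ (CS_combo hφ' hψ' hr0 hr1) hψ' hform
    rw [hD, D_segment hc hφ' hψ' hr0 hr1, ← mul_assoc, hrdef]
    field_simp

lemma welldef (hc : MMConvex S Dm) (hb : MMBalanced S Dm) {n : ℕ}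
    {φ ψ φ' ψ' : V →ₗ[ℂ] CMat n n} (hφ : φ ∈ S.CS n) (hψ : ψ ∈ S.CS n)
    (hφ' : φ' ∈ S.CS n) (hψ' : ψ' ∈ S.CS n) {t s : ℝ} (ht : 0 ≤ t) (hs : 0 ≤ s)
    (h : (t : ℂ) • (φ - ψ) = (s : ℂ) • (φ' - ψ')) :
    t * Dm.D n φ ψ = s * Dm.D n φ' ψ' := by
  rcases le_total s t with hle | hle
  · exact welldef_aux hc hb hφ hψ hφ' hψ' hs hle h
  · exact (welldef_aux hc hb hφ' hψ' hφ hψ ht hle h.symm).symm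

end Aux2

/-- The set of candidate values for the norm of `f`. -/
def repSet (S : MOUS V) (Dm : MatMetric S) (n : ℕ) (f : V →ₗ[ℂ] CMat n n) : Set ℝ :=
  {x | ∃ t : ℝ, 0 ≤ t ∧ ∃ φ, φ ∈ S.CS n ∧ ∃ ψ, ψ ∈ S.CS n ∧
      f = (t : ℂ) • (φ - ψ) ∧ x = t * Dm.D n φ ψ}

/-- The norm on `ℝ·SBₙ²(Ṽ)`. -/
def Qv (S : MOUS V) (Dm : MatMetric S) (n : ℕ) (f : V →ₗ[ℂ] CMat n n) : ℝ :=
  sInf (repSet S Dm n f)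

section Aux3

variable {S : MOUS V} {Dm : MatMetric S}

lemma Qv_eq (hc : MMConvex S Dm) (hb : MMBalanced S Dm) {n : ℕ} {f : V →ₗ[ℂ] CMat n n}
    {t : ℝ} (ht : 0 ≤ t) {φ ψ : V →ₗ[ℂ] CMat n n} (hφ : φ ∈ S.CS n) (hψ : ψ ∈ S.CS n)
    (hf : f = (t : ℂ) • (φ - ψ)) : Qv S Dm n f = t * Dm.D n φ ψ := by
  have hsing : repSet S Dm n f = {t * Dm.D n φ ψ} := by
    apply Set.eq_singleton_iff_unique_mem.2
    refine ⟨⟨t, ht, φ, hφ, ψ, hψ, hf, rfl⟩, ?_⟩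
    rintro x ⟨s, hs, φ', hφ', ψ', hψ', hf', rfl⟩
    exact welldef hc hb hφ' hψ' hφ hψ hs ht (hf'.symm.trans hf)
  rw [Qv, hsing, csInf_singleton]

lemma Qv_empty {n : ℕ} {f : V →ₗ[ℂ] CMat n n} (h : ∀ φ, φ ∉ S.CS n) : Qv S Dm n f = 0 := by
  have : repSet S Dm n f = ∅ := by
    ext x
    simp only [repSet, Set.mem_setOf_eq, Set.mem_empty_iff_false, iff_false, not_exists]
    rintro t ⟨ht, φ, hφ, _⟩
    exact h φ hφ
  rw [Qv, this, Real.sInf_empty]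

lemma RSB_rep {n : ℕ} {f : V →ₗ[ℂ] CMat n n} (hf : f ∈ RSB S n) :
    ∃ t : ℝ, 0 ≤ t ∧ ∃ φ, φ ∈ S.CS n ∧ ∃ ψ, ψ ∈ S.CS n ∧ f = (t : ℂ) • (φ - ψ) := by
  obtain ⟨t, φ, hφ, ψ, hψ, hfe⟩ := hf
  rcases le_total 0 t with ht | ht
  · exact ⟨t, ht, φ, hφ, ψ, hψ, hfe⟩
  · refine ⟨-t, by linarith, ψ, hψ, φ, hφ, ?_⟩
    rw [hfe]; push_cast; module

end Aux3

/-- if a matrix metric `D` on `CS(V)` is convex, midpoint balanced and midpoint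
concave, then there is a norm `Q''ₙ` on each real vector space `ℝ·SBₙ²(Ṽ)` with
`Q''ₙ(α*fα) ≤ ‖α‖²·Q''ₘ(f)`, `Q''_{m+n}(f ⊕ g) = max{Q''ₘ(f), Q''ₙ(g)}`, and
`Q''ₙ(φ - ψ) = Dₙ(φ, ψ)` for all matrix states `φ, ψ`. -/
theorem exists_norm_on_RSB (S : MOUS V) (Dm : MatMetric S)
    (h1 : MMConvex S Dm) (h2 : MMBalanced S Dm) (h3 : MMConcave S Dm) :
    ∃ Q : ∀ n, (V →ₗ[ℂ] CMat n n) → ℝ,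
      (∀ n (f g : V →ₗ[ℂ] CMat n n), f ∈ RSB S n → g ∈ RSB S n →
        Q n (f + g) ≤ Q n f + Q n g) ∧
      (∀ n (t : ℝ) (f : V →ₗ[ℂ] CMat n n), f ∈ RSB S n →
        Q n ((t : ℂ) • f) = |t| * Q n f) ∧
      (∀ n (f : V →ₗ[ℂ] CMat n n), f ∈ RSB S n → 0 ≤ Q n f) ∧
      (∀ n (f : V →ₗ[ℂ] CMat n n), f ∈ RSB S n → Q n f = 0 → f = 0) ∧
      (∀ m n (α : CMat m n) (f : V →ₗ[ℂ] CMat m m), f ∈ RSB S m →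
        Q n (mapCMul αᴴ f α) ≤ opNorm α ^ 2 * Q m f) ∧
      (∀ m n (f : V →ₗ[ℂ] CMat m m) (g : V →ₗ[ℂ] CMat n n), f ∈ RSB S m → g ∈ RSB S n →
        Q (m + n) (mapDSum f g) = max (Q m f) (Q n g)) ∧
      (∀ n (φ ψ : V →ₗ[ℂ] CMat n n), φ ∈ S.CS n → ψ ∈ S.CS n →
        Q n (φ - ψ) = Dm.D n φ ψ) := by
  refine ⟨Qv S Dm, ?_, ?_, ?_, ?_, ?_, ?_, ?_⟩
  · -- subadditivity
    intro n f g hfm hgm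
    obtain ⟨t, ht, φ₁, hφ₁, ψ₁, hψ₁, hf⟩ := RSB_rep hfm
    obtain ⟨s, hs, φ₂, hφ₂, ψ₂, hψ₂, hg⟩ := RSB_rep hgm
    have Qf := Qv_eq h1 h2 ht hφ₁ hψ₁ hf
    have Qg := Qv_eq h1 h2 hs hφ₂ hψ₂ hg
    rcases eq_or_lt_of_le (add_nonneg ht hs) with hu | hu
    · have ht0 : t = 0 := by linarith
      have hs0 : s = 0 := by linarith
      have hrep : f + g = ((0 : ℝ) : ℂ) • (φ₁ - ψ₁) := by
        rw [hf, hg, ht0, hs0]; push_cast; simp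
      rw [Qv_eq h1 h2 le_rfl hφ₁ hψ₁ hrep, Qf, Qg, ht0, hs0]
      simp
    · set u := t + s with hudef
      set lam := t / u with hldef
      have hl0 : 0 ≤ lam := div_nonneg ht hu.le
      have hl1 : lam ≤ 1 := (div_le_one hu).2 (by linarith)
      have e1 : u * lam = t := by rw [hldef]; field_simp
      have e2 : u * (1 - lam) = s := by rw [mul_sub, mul_one, e1]; linarith
      have hΦ := CS_combo hφ₁ hφ₂ hl0 hl1
      have hΨ := CS_combo hψ₁ hψ₂ hl0 hl1
      have hZ := CS_combo hφ₁ hψ₂ hl0 hl1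
      have hrep : f + g = (u : ℂ) •
          (((lam : ℂ) • φ₁ + ((1 - lam : ℝ) : ℂ) • φ₂)
            - ((lam : ℂ) • ψ₁ + ((1 - lam : ℝ) : ℂ) • ψ₂)) := by
        rw [hf, hg, ← e1, ← e2]; push_cast; module
      rw [Qv_eq h1 h2 hu.le hΦ hΨ hrep, Qf, Qg]
      have tri := Dm.triangle n ((lam : ℂ) • φ₁ + ((1 - lam : ℝ) : ℂ) • φ₂)
        ((lam : ℂ) • φ₁ + ((1 - lam : ℝ) : ℂ) • ψ₂)
        ((lam : ℂ) • ψ₁ + ((1 - lam : ℝ) : ℂ) • ψ₂) hΦ hZ hΨ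
      have e3 : Dm.D n ((lam : ℂ) • φ₁ + ((1 - lam : ℝ) : ℂ) • φ₂)
          ((lam : ℂ) • φ₁ + ((1 - lam : ℝ) : ℂ) • ψ₂) = (1 - lam) * Dm.D n φ₂ ψ₂ := by
        have htr := D_translate h2 hΦ hZ
          (CS_combo hφ₂ hψ₂ (by linarith) (by linarith)) hψ₂
          (show _ = (((1 - lam : ℝ) : ℂ) • φ₂ + ((1 - (1 - lam) : ℝ) : ℂ) • ψ₂) - ψ₂ by
            push_cast; module)
        rw [htr, D_segment h1 hφ₂ hψ₂ (by linarith) (by linarith)]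
      have e4 : Dm.D n ((lam : ℂ) • φ₁ + ((1 - lam : ℝ) : ℂ) • ψ₂)
          ((lam : ℂ) • ψ₁ + ((1 - lam : ℝ) : ℂ) • ψ₂) = lam * Dm.D n φ₁ ψ₁ := by
        have htr := D_translate h2 hZ hΨ (CS_combo hφ₁ hψ₁ hl0 hl1) hψ₁
          (show _ = (((lam : ℝ) : ℂ) • φ₁ + ((1 - lam : ℝ) : ℂ) • ψ₁) - ψ₁ by
            push_cast; module)
        rw [htr, D_segment h1 hφ₁ hψ₁ hl0 hl1]
      have hb : Dm.D n ((lam : ℂ) • φ₁ + ((1 - lam : ℝ) : ℂ) • φ₂)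
          ((lam : ℂ) • ψ₁ + ((1 - lam : ℝ) : ℂ) • ψ₂)
          ≤ lam * Dm.D n φ₁ ψ₁ + (1 - lam) * Dm.D n φ₂ ψ₂ := by
        rw [e3, e4] at tri; linarith
      calc u * Dm.D n ((lam : ℂ) • φ₁ + ((1 - lam : ℝ) : ℂ) • φ₂)
            ((lam : ℂ) • ψ₁ + ((1 - lam : ℝ) : ℂ) • ψ₂)
          ≤ u * (lam * Dm.D n φ₁ ψ₁ + (1 - lam) * Dm.D n φ₂ ψ₂) :=
            mul_le_mul_of_nonneg_left hb hu.le
        _ = (u * lam) * Dm.D n φ₁ ψ₁ + (u * (1 - lam)) * Dm.D n φ₂ ψ₂ := by ring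
        _ = t * Dm.D n φ₁ ψ₁ + s * Dm.D n φ₂ ψ₂ := by rw [e1, e2]
  · -- homogeneity
    intro n t f hfm
    obtain ⟨s, hs, φ, hφ, ψ, hψ, hf⟩ := RSB_rep hfm
    have Qf := Qv_eq h1 h2 hs hφ hψ hf
    rcases le_total 0 t with ht | ht
    · have hrep : (t : ℂ) • f = ((t * s : ℝ) : ℂ) • (φ - ψ) := by
        rw [hf]; push_cast; module
      rw [Qv_eq h1 h2 (mul_nonneg ht hs) hφ hψ hrep, Qf, abs_of_nonneg ht]; ring
    · have hrep : (t : ℂ) • f = (((-t) * s : ℝ) : ℂ) • (ψ - φ) := by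
        rw [hf]; push_cast; module
      rw [Qv_eq h1 h2 (mul_nonneg (neg_nonneg.2 ht) hs) hψ hφ hrep,
        Dm.symm n ψ φ hψ hφ, Qf, abs_of_nonpos ht]; ring
  · -- nonnegativity
    intro n f hfm
    obtain ⟨t, ht, φ, hφ, ψ, hψ, hf⟩ := RSB_rep hfm
    rw [Qv_eq h1 h2 ht hφ hψ hf]
    exact mul_nonneg ht (Dm.nonneg n φ ψ hφ hψ)
  · -- definiteness
    intro n f hfm hQ
    obtain ⟨t, ht, φ, hφ, ψ, hψ, hf⟩ := RSB_rep hfm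
    rw [Qv_eq h1 h2 ht hφ hψ hf] at hQ
    rcases mul_eq_zero.1 hQ with h | h
    · rw [hf, h]; simp
    · rw [hf, (Dm.eq_zero_iff n φ ψ hφ hψ).1 h]; simp
  · -- conjugation
    intro m n α f hfm
    obtain ⟨t, ht, φ, hφ, ψ, hψ, hf⟩ := RSB_rep hfm
    have Qf := Qv_eq h1 h2 ht hφ hψ hf
    have hQf0 : 0 ≤ Qv S Dm m f := by
      rw [Qf]; exact mul_nonneg ht (Dm.nonneg m φ ψ hφ hψ)
    by_cases hCSn : ∃ χ, χ ∈ S.CS n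
    · obtain ⟨χ, hχ⟩ := hCSn
      by_cases hα : α = 0
      · have h0 : mapCMul αᴴ f α = ((0 : ℝ) : ℂ) • (χ - χ) := by
          apply LinearMap.ext; intro v
          show αᴴ * f v * α = _
          rw [hα]; simp
        rw [Qv_eq h1 h2 le_rfl hχ hχ h0, zero_mul]
        exact mul_nonneg (pow_nonneg (opNorm_nonneg' α) 2) hQf0
      · set c := opNorm α with hcdef
        have hc0 : 0 < c :=
          lt_of_le_of_ne (opNorm_nonneg' α) fun h => hα ((opNorm_eq_zero_iff α).1 h.symm)
        set α' : CMat m n := ((c⁻¹ : ℝ) : ℂ) • α with hα'def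
        have hαc : α = ((c : ℝ) : ℂ) • α' := by
          rw [hα'def, smul_smul, ← Complex.ofReal_mul, mul_inv_cancel₀ hc0.ne',
            Complex.ofReal_one, one_smul]
        have hα'n : opNorm α' ≤ 1 := by
          rw [hα'def, opNorm_real_smul, abs_of_nonneg (inv_nonneg.2 hc0.le), ← hcdef,
            inv_mul_cancel₀ hc0.ne']
        have hpsd := psd_one_sub_conj α' hα'n
        open scoped MatrixOrder in
        set γ := CFC.sqrt (1 - α'ᴴ * α') with hγdef
        open scoped MatrixOrder in
        have hγh : γᴴ = γ := (Matrix.nonneg_iff_posSemidef.mp (CFC.sqrt_nonneg _)).1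
        open scoped MatrixOrder in
        have hγm : γ * γ = 1 - α'ᴴ * α' :=
          CFC.sqrt_mul_sqrt_self _ (Matrix.nonneg_iff_posSemidef.mpr hpsd)
        set β : Matrix (Fin (m + n)) (Fin n) ℂ :=
          (Matrix.fromRows α' γ).submatrix finSumFinEquiv.symm id with hβdef
        have hβ : βᴴ * β = 1 := stacked_isometry α' γ hγh (by rw [hγm]; abel)
        have hΦ' := CS_isometry (S := S) β hβ (CS_mapDSum hφ hχ)
        have hΨ' := CS_isometry (S := S) β hβ (CS_mapDSum hψ hχ)
        have hrep : mapCMul αᴴ f α = ((t * c ^ 2 : ℝ) : ℂ) •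
            (mapCMul βᴴ (mapDSum φ χ) β - mapCMul βᴴ (mapDSum ψ χ) β) := by
          apply LinearMap.ext; intro v
          show αᴴ * f v * α = _
          have hΦv : (mapCMul βᴴ (mapDSum φ χ) β) v
              = α'ᴴ * (φ v) * α' + γᴴ * (χ v) * γ := stacked_conj_mul α' γ (φ v) (χ v)
          have hΨv : (mapCMul βᴴ (mapDSum ψ χ) β) v
              = α'ᴴ * (ψ v) * α' + γᴴ * (χ v) * γ := stacked_conj_mul α' γ (ψ v) (χ v)
          have hfv : f v = (t : ℂ) • (φ v - ψ v) := by rw [hf]; rfl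
          rw [hfv, hαc]
          simp only [LinearMap.smul_apply, LinearMap.sub_apply, hΦv, hΨv,
            conjTranspose_smul, Matrix.smul_mul, Matrix.mul_smul, smul_smul]
          rw [Matrix.mul_sub, Matrix.sub_mul]
          rw [show α'ᴴ * (φ v) * α' + γᴴ * (χ v) * γ - (α'ᴴ * (ψ v) * α' + γᴴ * (χ v) * γ)
              = α'ᴴ * (φ v) * α' - α'ᴴ * (ψ v) * α' by abel]
          congr 1
          rw [Complex.star_def, Complex.conj_ofReal]
          push_cast
          ring
        rw [Qv_eq h1 h2 (by positivity) hΦ' hΨ' hrep, Qf]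
        have hconj := Dm.conj_le (m + n) n β hβ (mapDSum φ χ) (mapDSum ψ χ)
          (CS_mapDSum hφ hχ) (CS_mapDSum hψ hχ)
        have hds := Dm.dsum_eq m n φ ψ χ χ hφ hψ hχ hχ
        rw [D_self hχ, max_eq_left (Dm.nonneg m φ ψ hφ hψ)] at hds
        rw [hds] at hconj
        calc (t * c ^ 2) * Dm.D n (mapCMul βᴴ (mapDSum φ χ) β) (mapCMul βᴴ (mapDSum ψ χ) β)
            ≤ (t * c ^ 2) * Dm.D m φ ψ :=
              mul_le_mul_of_nonneg_left hconj (by positivity)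
          _ = opNorm α ^ 2 * (t * Dm.D m φ ψ) := by rw [← hcdef]; ring
    · push_neg at hCSn
      rw [Qv_empty hCSn]
      exact mul_nonneg (pow_nonneg (opNorm_nonneg' α) 2) hQf0
  · -- direct sums
    intro m n f g hfm hgm
    obtain ⟨t, ht, φ₁, hφ₁, ψ₁, hψ₁, hf⟩ := RSB_rep hfm
    obtain ⟨s, hs, φ₂, hφ₂, ψ₂, hψ₂, hg⟩ := RSB_rep hgm
    have Qf := Qv_eq h1 h2 ht hφ₁ hψ₁ hf
    have Qg := Qv_eq h1 h2 hs hφ₂ hψ₂ hg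
    rcases le_total s t with hst | hst
    · rcases eq_or_lt_of_le ht with ht0 | ht0
      · have hs0 : s = 0 := le_antisymm (hst.trans ht0.symm.le) hs
        have hrep : mapDSum f g = ((0 : ℝ) : ℂ) • (mapDSum φ₁ φ₂ - mapDSum ψ₁ ψ₂) := by
          rw [hf, hg, ← ht0, hs0]
          push_cast
          exact mapDSum_smul_sub 0 φ₁ ψ₁ φ₂ ψ₂
        rw [Qv_eq h1 h2 le_rfl (CS_mapDSum hφ₁ hφ₂) (CS_mapDSum hψ₁ hψ₂) hrep,
          Qf, Qg, ← ht0, hs0]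
        simp
      · set r := s / t with hrdef
        have hr0 : 0 ≤ r := div_nonneg hs ht0.le
        have hr1 : r ≤ 1 := (div_le_one ht0).2 hst
        have htr : t * r = s := by rw [hrdef]; field_simp [ht0.ne']
        have hφ₂' := CS_combo hφ₂ hψ₂ hr0 hr1
        have hg' : g = (t : ℂ) • (((r : ℂ) • φ₂ + ((1 - r : ℝ) : ℂ) • ψ₂) - ψ₂) := by
          rw [hg, ← htr]; push_cast; module
        have hrep : mapDSum f g = (t : ℂ) •
            (mapDSum φ₁ ((r : ℂ) • φ₂ + ((1 - r : ℝ) : ℂ) • ψ₂) - mapDSum ψ₁ ψ₂) := by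
          rw [hf, hg']
          exact mapDSum_smul_sub (t : ℂ) φ₁ ψ₁ _ ψ₂
        rw [Qv_eq h1 h2 ht (CS_mapDSum hφ₁ hφ₂') (CS_mapDSum hψ₁ hψ₂) hrep,
          Dm.dsum_eq m n φ₁ ψ₁ _ ψ₂ hφ₁ hψ₁ hφ₂' hψ₂,
          D_segment h1 hφ₂ hψ₂ hr0 hr1, Qf, Qg,
          mul_max_of_nonneg _ _ ht, ← mul_assoc, htr]
    · rcases eq_or_lt_of_le hs with hs0 | hs0
      · have ht0 : t = 0 := le_antisymm (hst.trans hs0.symm.le) ht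
        have hrep : mapDSum f g = ((0 : ℝ) : ℂ) • (mapDSum φ₁ φ₂ - mapDSum ψ₁ ψ₂) := by
          rw [hf, hg, ← hs0, ht0]
          push_cast
          exact mapDSum_smul_sub 0 φ₁ ψ₁ φ₂ ψ₂
        rw [Qv_eq h1 h2 le_rfl (CS_mapDSum hφ₁ hφ₂) (CS_mapDSum hψ₁ hψ₂) hrep,
          Qf, Qg, ← hs0, ht0]
        simp
      · set r := t / s with hrdef
        have hr0 : 0 ≤ r := div_nonneg ht hs0.le
        have hr1 : r ≤ 1 := (div_le_one hs0).2 hst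
        have htr : s * r = t := by rw [hrdef]; field_simp [hs0.ne']
        have hφ₁' := CS_combo hφ₁ hψ₁ hr0 hr1
        have hf' : f = (s : ℂ) • (((r : ℂ) • φ₁ + ((1 - r : ℝ) : ℂ) • ψ₁) - ψ₁) := by
          rw [hf, ← htr]; push_cast; module
        have hrep : mapDSum f g = (s : ℂ) •
            (mapDSum ((r : ℂ) • φ₁ + ((1 - r : ℝ) : ℂ) • ψ₁) φ₂ - mapDSum ψ₁ ψ₂) := by
          rw [hf', hg]
          exact mapDSum_smul_sub (s : ℂ) _ ψ₁ φ₂ ψ₂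
        rw [Qv_eq h1 h2 hs (CS_mapDSum hφ₁' hφ₂) (CS_mapDSum hψ₁ hψ₂) hrep,
          Dm.dsum_eq m n _ ψ₁ φ₂ ψ₂ hφ₁' hψ₁ hφ₂ hψ₂,
          D_segment h1 hφ₁ hψ₁ hr0 hr1, Qf, Qg,
          mul_max_of_nonneg _ _ hs, ← mul_assoc, htr]
  · -- recovering the metric
    intro n φ ψ hφ hψ
    have hrep : φ - ψ = ((1 : ℝ) : ℂ) • (φ - ψ) := by push_cast; rw [one_smul]
    rw [Qv_eq h1 h2 zero_le_one hφ hψ hrep, one_mul]
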